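/- Let C = while e do (C₁;…;Cₙ) be a loop of the WHILE language, E its dependency relation, and S₁,…,S_k a saturated covering of C, with split loops C^1,…,C^k. If the execution of C from a state σ terminates in a state σ', then for every j ∈ {1,…,k} the execution of the split loop C^j from σ terminates in some state σ_j, and for every variable x that is modified by C^j (i.e., x ∈ Out(C_i) for some i ∈ S_j) one has σ_j(x) = σ'(x). That is, each split loop computes, for each of its modified variables, the same final value as the original loop. -/

import Mathlib

/-- Variables: a countably infinite set. -/
abbrev Var := ℕ

/-- Values: integers or integer arrays (total functions ℤ → ℤ). -/
inductive Val : Type where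
  | int : ℤ → Val
  | arr : (ℤ → ℤ) → Val

/-- Coerce a value to an integer. -/
def Val.toInt : Val → ℤ
  | .int z => z
  | .arr _ => 0

/-- Coerce a value to an array. -/
def Val.toArr : Val → (ℤ → ℤ)
  | .int _ => fun _ => 0
  | .arr a => a

/-- States: total maps from variables to values. -/
abbrev State := Var → Val

/-- Expressions: variables, integer literals, array reads, and
applications of fixed interpreted `n`-ary operators. -/
inductive Expr : Type where
  | var : Var → Expr
  | lit : ℤ → Expr
  | read : Var → Expr → Expr
  | op : (n : ℕ) → ((Fin n → ℤ) → ℤ) → (Fin n → Expr) → Expr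

/-- Evaluation of expressions. -/
def Expr.eval (σ : State) : Expr → Val
  | .var x => σ x
  | .lit z => .int z
  | .read t e => .int ((σ t).toArr ((Expr.eval σ e).toInt))
  | .op n f args => .int (f fun i => (Expr.eval σ (args i)).toInt)

/-- An expression is truthy in a state if it evaluates to a nonzero integer. -/
def Expr.truthy (e : Expr) (σ : State) : Prop := (e.eval σ).toInt ≠ 0

/-- Variables occurring in an expression. -/
def Expr.occ : Expr → Set Var
  | .var x => {x}
  | .lit _ => ∅
  | .read t e => {t} ∪ Expr.occ e
  | .op n _ args => ⋃ i : Fin n, Expr.occ (args i)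

/-- Commands of the WHILE language. -/
inductive Com : Type where
  | assign : Var → Expr → Com
  | store : Var → Expr → Expr → Com          -- t[e₁] := e₂
  | ite : Expr → Com → Com → Com
  | whileDo : Expr → Com → Com
  | use : List Var → Com
  | skip : Com
  | seq : Com → Com → Com

/-- `Out C`: the set of variables modified by `C`. -/
def Com.out : Com → Set Var
  | .assign x _ => {x}
  | .store t _ _ => {t}
  | .ite _ c₁ c₂ => c₁.out ∪ c₂.out
  | .whileDo _ c => c.out
  | .use _ => ∅
  | .skip => ∅
  | .seq c₁ c₂ => c₁.out ∪ c₂.out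

/-- `In C`: the set of variables used by `C`. -/
def Com.inp : Com → Set Var
  | .assign _ e => e.occ
  | .store _ e₁ e₂ => e₁.occ ∪ e₂.occ
  | .ite e c₁ c₂ => e.occ ∪ c₁.inp ∪ c₂.inp
  | .whileDo e c => e.occ ∪ c.inp
  | .use xs => {x | x ∈ xs}
  | .skip => ∅
  | .seq c₁ c₂ => c₁.inp ∪ c₂.inp

/-- `Occ C`: the set of variables occurring in `C`. -/
def Com.occ : Com → Set Var
  | .assign x e => {x} ∪ e.occ
  | .store t e₁ e₂ => {t} ∪ e₁.occ ∪ e₂.occ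
  | .ite e c₁ c₂ => e.occ ∪ c₁.occ ∪ c₂.occ
  | .whileDo e c => e.occ ∪ c.occ
  | .use xs => {x | x ∈ xs}
  | .skip => ∅
  | .seq c₁ c₂ => c₁.occ ∪ c₂.occ

/-- Standard deterministic big-step operational semantics. -/
inductive BigStep : Com → State → State → Prop where
  | assign {x e σ} :
      BigStep (.assign x e) σ (Function.update σ x (e.eval σ))
  | store {t e₁ e₂ σ} :
      BigStep (.store t e₁ e₂) σ
        (Function.update σ t
          (Val.arr (Function.update (σ t).toArr ((e₁.eval σ).toInt) ((e₂.eval σ).toInt))))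
  | iteTrue {e c₁ c₂ σ σ'} : e.truthy σ → BigStep c₁ σ σ' →
      BigStep (.ite e c₁ c₂) σ σ'
  | iteFalse {e c₁ c₂ σ σ'} : ¬ e.truthy σ → BigStep c₂ σ σ' →
      BigStep (.ite e c₁ c₂) σ σ'
  | whileTrue {e c σ σ₁ σ₂} : e.truthy σ → BigStep c σ σ₁ →
      BigStep (.whileDo e c) σ₁ σ₂ → BigStep (.whileDo e c) σ σ₂
  | whileFalse {e c σ} : ¬ e.truthy σ → BigStep (.whileDo e c) σ σ
  | use {xs σ} : BigStep (.use xs) σ σ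
  | skip {σ} : BigStep .skip σ σ
  | seq {c₁ c₂ σ σ₁ σ₂} : BigStep c₁ σ σ₁ → BigStep c₂ σ₁ σ₂ →
      BigStep (.seq c₁ c₂) σ σ₂

/-- Sequential composition of a list of commands. -/
def seqList (l : List Com) : Com := l.foldr Com.seq Com.skip

/-- The body `C_{i₁};…;C_{i_m}` selected by a set `S` of indices,
with `i₁ < … < i_m` enumerating `S`. -/
def selBody {n : ℕ} (body : Fin n → Com) (S : Finset (Fin n)) : Com :=
  seqList ((S.sort (· ≤ ·)).map body)

/-- The split loop `while e do (C_{i₁};…;C_{i_m})` for a set `S` of indices. -/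
def splitLoop {n : ℕ} (e : Expr) (body : Fin n → Com) (S : Finset (Fin n)) : Com :=
  Com.whileDo e (selBody body S)

/-- The dependency relation of the loop `while e do (C₁;…;Cₙ)`:
`Dep e body i j` iff either `i ≠ j` and `Out(C_j) ∩ (In(C_i) ∪ Out(C_i)) ≠ ∅`
(flow and output dependence), or `Out(C_j) ∩ Occ(e) ≠ ∅` (loop-guard correction). -/
def Dep {n : ℕ} (e : Expr) (body : Fin n → Com) (i j : Fin n) : Prop :=
  (i ≠ j ∧ ((body j).out ∩ ((body i).inp ∪ (body i).out)).Nonempty) ∨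
  ((body j).out ∩ e.occ).Nonempty

/-- A saturated covering of the loop `while e do (C₁;…;Cₙ)`:
a finite family of nonempty subsets of `{1,…,n}` covering it,
each closed under the dependency relation. -/
def SaturatedCovering {n k : ℕ} (e : Expr) (body : Fin n → Com)
    (S : Fin k → Finset (Fin n)) : Prop :=
  (∀ j, (S j).Nonempty) ∧ (∀ i, ∃ j, i ∈ S j) ∧
  (∀ j i m, i ∈ S j → Dep e body i m → m ∈ S j)

/-- `p`-fold sequential iteration of a command. -/
def iterate (c : Com) (p : ℕ) : Com := seqList (List.replicate p c)

/-! ### Auxiliary lemmas -/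

lemma Expr.eval_congr {σ τ : State} :
    ∀ {e : Expr}, (∀ x ∈ e.occ, σ x = τ x) → e.eval σ = e.eval τ
  | .var x, h => h x (by simp [Expr.occ])
  | .lit _, _ => rfl
  | .read t e, h => by
      have ht : σ t = τ t := h t (by simp [Expr.occ])
      have he := Expr.eval_congr (e := e) (fun x hx => h x (by simp [Expr.occ, hx]))
      simp [Expr.eval, ht, he]
  | .op n f args, h => by
      have hi : ∀ i, (args i).eval σ = (args i).eval τ := fun i =>
        Expr.eval_congr (fun x hx => h x (by
          simp only [Expr.occ, Set.mem_iUnion]; exact ⟨i, hx⟩))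
      simp only [Expr.eval]
      have : (fun i => (Expr.eval σ (args i)).toInt) = fun i => (Expr.eval τ (args i)).toInt :=
        funext fun i => by rw [hi i]
      rw [this]

lemma Expr.truthy_congr {σ τ : State} {e : Expr} (h : ∀ x ∈ e.occ, σ x = τ x) :
    e.truthy σ ↔ e.truthy τ := by
  unfold Expr.truthy; rw [Expr.eval_congr h]

lemma BigStep.frame {c : Com} {σ σ' : State} (h : BigStep c σ σ') :
    ∀ x ∉ c.out, σ' x = σ x := by
  induction h with
  | assign =>
      intro x hx
      simp only [Com.out, Set.mem_singleton_iff] at hx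
      exact Function.update_of_ne hx _ _
  | store =>
      intro x hx
      simp only [Com.out, Set.mem_singleton_iff] at hx
      exact Function.update_of_ne hx _ _
  | iteTrue _ _ ih =>
      intro x hx
      exact ih x (fun hm => hx (Set.mem_union_left _ hm))
  | iteFalse _ _ ih =>
      intro x hx
      exact ih x (fun hm => hx (Set.mem_union_right _ hm))
  | whileTrue _ _ _ ih₁ ih₂ =>
      intro x hx
      rw [ih₂ x hx, ih₁ x hx]
  | whileFalse => intro x _; rfl
  | use => intro x _; rfl
  | skip => intro x _; rfl
  | seq _ _ ih₁ ih₂ =>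
      intro x hx
      rw [ih₂ x (fun hm => hx (Set.mem_union_right _ hm)),
        ih₁ x (fun hm => hx (Set.mem_union_left _ hm))]

lemma BigStep.coincide {c : Com} {σ σ' : State} (h : BigStep c σ σ') (A : Set Var)
    (hA : c.inp ∪ c.out ⊆ A) :
    ∀ τ : State, (∀ x ∈ A, σ x = τ x) →
      ∃ τ', BigStep c τ τ' ∧ ∀ x ∈ A, σ' x = τ' x := by
  induction h with
  | @assign x e σ =>
      intro τ hg
      have hx : x ∈ A := hA (Or.inr rfl)
      have he : e.eval σ = e.eval τ :=
        Expr.eval_congr fun y hy => hg y (hA (Or.inl hy))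
      refine ⟨_, BigStep.assign, fun y hy => ?_⟩
      by_cases hxy : y = x
      · subst hxy; simp [he]
      · simp [Function.update_of_ne hxy, hg y hy]
  | @store t e₁ e₂ σ =>
      intro τ hg
      have ht : t ∈ A := hA (Or.inr rfl)
      have he₁ : e₁.eval σ = e₁.eval τ :=
        Expr.eval_congr fun y hy => hg y (hA (Or.inl (Or.inl hy)))
      have he₂ : e₂.eval σ = e₂.eval τ :=
        Expr.eval_congr fun y hy => hg y (hA (Or.inl (Or.inr hy)))
      refine ⟨_, BigStep.store, fun y hy => ?_⟩
      by_cases hty : y = t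
      · subst hty; simp [he₁, he₂, hg y hy]
      · simp [Function.update_of_ne hty, hg y hy]
  | @iteTrue e c₁ c₂ σ σ' htr _ ih =>
      intro τ hg
      have hA₁ : c₁.inp ∪ c₁.out ⊆ A := by
        intro y hy
        rcases hy with hy | hy
        · exact hA (Or.inl (Or.inl (Or.inr hy)))
        · exact hA (Or.inr (Or.inl hy))
      obtain ⟨τ', h₁, h₂⟩ := ih hA₁ τ hg
      have : e.truthy τ := by
        rw [← Expr.truthy_congr (fun y hy => hg y (hA (Or.inl (Or.inl (Or.inl hy)))))]
        exact htr
      exact ⟨τ', BigStep.iteTrue this h₁, h₂⟩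
  | @iteFalse e c₁ c₂ σ σ' htr _ ih =>
      intro τ hg
      have hA₂ : c₂.inp ∪ c₂.out ⊆ A := by
        intro y hy
        rcases hy with hy | hy
        · exact hA (Or.inl (Or.inr hy))
        · exact hA (Or.inr (Or.inr hy))
      obtain ⟨τ', h₁, h₂⟩ := ih hA₂ τ hg
      have : ¬ e.truthy τ := by
        rw [← Expr.truthy_congr (fun y hy => hg y (hA (Or.inl (Or.inl (Or.inl hy)))))]
        exact htr
      exact ⟨τ', BigStep.iteFalse this h₁, h₂⟩
  | @whileTrue e c σ σ₁ σ₂ htr _ _ ih₁ ih₂ =>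
      intro τ hg
      have hAc : c.inp ∪ c.out ⊆ A := by
        intro y hy
        rcases hy with hy | hy
        · exact hA (Or.inl (Or.inr hy))
        · exact hA (Or.inr hy)
      obtain ⟨τ₁, hτ₁, hg₁⟩ := ih₁ hAc τ hg
      obtain ⟨τ₂, hτ₂, hg₂⟩ := ih₂ hA τ₁ hg₁
      have : e.truthy τ := by
        rw [← Expr.truthy_congr (fun y hy => hg y (hA (Or.inl (Or.inl hy))))]
        exact htr
      exact ⟨τ₂, BigStep.whileTrue this hτ₁ hτ₂, hg₂⟩
  | @whileFalse e c σ htr =>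
      intro τ hg
      have : ¬ e.truthy τ := by
        rw [← Expr.truthy_congr (fun y hy => hg y (hA (Or.inl (Or.inl hy))))]
        exact htr
      exact ⟨τ, BigStep.whileFalse this, hg⟩
  | use => intro τ hg; exact ⟨τ, BigStep.use, hg⟩
  | skip => intro τ hg; exact ⟨τ, BigStep.skip, hg⟩
  | @seq c₁ c₂ σ σ₁ σ₂ _ _ ih₁ ih₂ =>
      intro τ hg
      have hA₁ : c₁.inp ∪ c₁.out ⊆ A := by
        intro y hy
        rcases hy with hy | hy
        · exact hA (Or.inl (Or.inl hy))
        · exact hA (Or.inr (Or.inl hy))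
      have hA₂ : c₂.inp ∪ c₂.out ⊆ A := by
        intro y hy
        rcases hy with hy | hy
        · exact hA (Or.inl (Or.inr hy))
        · exact hA (Or.inr (Or.inr hy))
      obtain ⟨τ₁, hτ₁, hg₁⟩ := ih₁ hA₁ τ hg
      obtain ⟨τ₂, hτ₂, hg₂⟩ := ih₂ hA₂ τ₁ hg₁
      exact ⟨τ₂, BigStep.seq hτ₁ hτ₂, hg₂⟩

lemma seqList_cons (a : Com) (l : List Com) :
    seqList (a :: l) = Com.seq a (seqList l) := rfl

lemma bodyStep {n : ℕ} (body : Fin n → Com) (p : Fin n → Bool) (Good : Set Var)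
    (hin : ∀ i, p i = true → (body i).inp ∪ (body i).out ⊆ Good)
    (hout : ∀ i, p i = false → ∀ x ∈ (body i).out, x ∉ Good) :
    ∀ (L : List (Fin n)) {σ σ' : State}, BigStep (seqList (L.map body)) σ σ' →
      ∀ τ : State, (∀ x ∈ Good, σ x = τ x) →
      ∃ τ', BigStep (seqList ((L.filter p).map body)) τ τ' ∧ ∀ x ∈ Good, σ' x = τ' x := by
  intro L
  induction L with
  | nil =>
      intro σ σ' h τ hg
      cases h
      exact ⟨τ, BigStep.skip, hg⟩
  | cons i L ih =>
      intro σ σ' h τ hg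
      rw [List.map_cons, seqList_cons] at h
      cases h with
      | @seq _ _ _ σ₁ _ h₁ h₂ =>
        cases hp : p i with
        | true =>
            obtain ⟨τ₁, hτ₁, hg₁⟩ := h₁.coincide Good (hin i hp) τ hg
            obtain ⟨τ', hτ', hg'⟩ := ih h₂ τ₁ hg₁
            refine ⟨τ', ?_, hg'⟩
            rw [List.filter_cons_of_pos hp, List.map_cons, seqList_cons]
            exact BigStep.seq hτ₁ hτ'
        | false =>
            have hg₁ : ∀ x ∈ Good, σ₁ x = τ x := fun x hx => by
              rw [h₁.frame x (fun hm => hout i hp x hm hx)]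
              exact hg x hx
            obtain ⟨τ', hτ', hg'⟩ := ih h₂ τ hg₁
            refine ⟨τ', ?_, hg'⟩
            rwa [List.filter_cons_of_neg (by simp [hp])]

lemma whileSplit {e : Expr} {body' bodyS : Com} (Good : Set Var)
    (hocc : e.occ ⊆ Good)
    (hstep : ∀ σ σ' : State, BigStep body' σ σ' → ∀ τ : State, (∀ x ∈ Good, σ x = τ x) →
       ∃ τ', BigStep bodyS τ τ' ∧ ∀ x ∈ Good, σ' x = τ' x)
    {σ σ' : State} (h : BigStep (.whileDo e body') σ σ') :
    ∀ τ : State, (∀ x ∈ Good, σ x = τ x) →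
      ∃ τ', BigStep (.whileDo e bodyS) τ τ' ∧ ∀ x ∈ Good, σ' x = τ' x := by
  generalize hc : Com.whileDo e body' = c at h
  induction h with
  | assign => exact absurd hc (by simp)
  | store => exact absurd hc (by simp)
  | iteTrue => exact absurd hc (by simp)
  | iteFalse => exact absurd hc (by simp)
  | use => exact absurd hc (by simp)
  | skip => exact absurd hc (by simp)
  | seq => exact absurd hc (by simp)
  | @whileTrue e₀ c₀ σ σ₁ σ₂ htr hb _ _ ih₂ =>
      cases hc
      intro τ hg
      obtain ⟨τ₁, hτ₁, hg₁⟩ := hstep _ _ hb τ hg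
      obtain ⟨τ₂, hτ₂, hg₂⟩ := ih₂ rfl τ₁ hg₁
      have : e.truthy τ := by
        rw [← Expr.truthy_congr (fun y hy => hg y (hocc hy))]
        exact htr
      exact ⟨τ₂, BigStep.whileTrue this hτ₁ hτ₂, hg₂⟩
  | @whileFalse e₀ c₀ σ htr =>
      cases hc
      intro τ hg
      have : ¬ e.truthy τ := by
        rw [← Expr.truthy_congr (fun y hy => hg y (hocc hy))]
        exact htr
      exact ⟨τ, BigStep.whileFalse this, hg⟩

lemma sort_filter_eq {n : ℕ} (T : Finset (Fin n)) :
    ((Finset.univ : Finset (Fin n)).sort (· ≤ ·)).filter (fun i => decide (i ∈ T))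
      = T.sort (· ≤ ·) := by
  apply List.Perm.eq_of_pairwise' (r := (· ≤ ·))
  rotate_right
  · rw [List.perm_ext_iff_of_nodup (List.Nodup.filter _ (Finset.sort_nodup _ _))
      (Finset.sort_nodup _ _)]
    intro a
    simp [List.mem_filter, Finset.mem_sort]
  · exact List.Pairwise.filter _ (Finset.pairwise_sort _ _)
  · exact Finset.pairwise_sort _ _

/-- If the execution of the loop from `σ` terminates in `σ'`, then
each split loop `C^j` terminates from `σ` in some `σ_j`, and for every variable
`x` modified by `C^j` one has `σ_j x = σ' x`. -/
theorem split_loop_computes_same_values {n k : ℕ} (e : Expr)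
    (body : Fin n → Com) (S : Fin k → Finset (Fin n))
    (hS : SaturatedCovering e body S) (σ σ' : State)
    (h : BigStep (splitLoop e body Finset.univ) σ σ') :
    ∀ j : Fin k, ∃ σj : State,
      BigStep (splitLoop e body (S j)) σ σj ∧
      ∀ x : Var, (∃ i ∈ S j, x ∈ (body i).out) → σj x = σ' x := by
  intro j
  classical
  obtain ⟨hne, _, hclosed⟩ := hS
  obtain ⟨i₀, hi₀⟩ := hne j
  set Good : Set Var := {x | ∀ i, i ∉ S j → x ∉ (body i).out} with hGoodDef
  have hGoodMem : ∀ {x : Var}, (∃ i ∈ S j, x ∈ (body i).out) → x ∈ Good := by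
    rintro x ⟨i, hi, hx⟩ i' hi' hx'
    exact hi' (hclosed j i i' hi (Or.inl ⟨by rintro rfl; exact hi' hi, ⟨x, hx', Or.inr hx⟩⟩))
  have hocc : e.occ ⊆ Good := by
    intro x hx i hi hxo
    exact hi (hclosed j i₀ i hi₀ (Or.inr ⟨x, hxo, hx⟩))
  have hin : ∀ i, (fun i => decide (i ∈ S j)) i = true →
      (body i).inp ∪ (body i).out ⊆ Good := by
    intro i hi x hx i' hi' hx'
    simp only [decide_eq_true_eq] at hi
    exact hi' (hclosed j i i' hi (Or.inl ⟨by rintro rfl; exact hi' hi, ⟨x, hx', hx⟩⟩))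
  have hout : ∀ i, (fun i => decide (i ∈ S j)) i = false →
      ∀ x ∈ (body i).out, x ∉ Good := by
    intro i hi x hx hG
    simp only [decide_eq_false_iff_not] at hi
    exact hG i hi hx
  have hstep : ∀ σ₀ σ₀' : State, BigStep (selBody body Finset.univ) σ₀ σ₀' →
      ∀ τ : State, (∀ x ∈ Good, σ₀ x = τ x) →
      ∃ τ', BigStep (selBody body (S j)) τ τ' ∧ ∀ x ∈ Good, σ₀' x = τ' x := by
    intro σ₀ σ₀' hb τ hg
    obtain ⟨τ', hτ', hg'⟩ := bodyStep body (fun i => decide (i ∈ S j)) Good hin hout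
      ((Finset.univ : Finset (Fin n)).sort (· ≤ ·)) hb τ hg
    rw [sort_filter_eq (S j)] at hτ'
    exact ⟨τ', hτ', hg'⟩
  obtain ⟨σj, hσj, hgj⟩ := whileSplit Good hocc hstep h σ (fun x _ => rfl)
  exact ⟨σj, hσj, fun x hx => (hgj x (hGoodMem hx)).symm⟩
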